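/- Let μ be a probability measure and Φ ∈ L²(μ; R^k) with ∫Φ dμ = 0 and var(Φ) invertible, and h ∈ L²(μ) with ∫h dμ = θ₀. Define h^⊥ = h - (∫hΦᵗdμ)[∫ΦΦᵗdμ]^{-1}Φ and V = Var_μ(h^⊥). Then among f ∈ L²(μ) with ∫f dμ = 1, ∫Φ f dμ = 0, and ∫ h f dμ = θ, the minimum of ∫(1-f)² dμ equals (θ₀-θ)² V^{-1}, attained at f_θ = 1 - (θ₀-θ)V^{-1}(h^⊥ - θ₀). -/

import Mathlib

open MeasureTheory

private lemma l2_mul_int {X : Type*} [MeasurableSpace X] {μ : Measure X} {f g : X → ℝ}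
    (hf : MemLp f 2 μ) (hg : MemLp g 2 μ) : Integrable (fun x => f x * g x) μ := by
  have := hg.smul (φ := f) hf (r := 1)
    (hpqr := ⟨by simp only [one_div, ENNReal.inv_two_add_inv_two, inv_one]⟩)
  rw [memLp_one_iff_integrable] at this
  exact this

/-- Cauchy–Schwarz in the needed form. -/
private lemma cs_aux {X : Type*} [MeasurableSpace X] {μ : Measure X} [IsFiniteMeasure μ]
    {q g : X → ℝ} (hq : MemLp q 2 μ) (hg : MemLp g 2 μ)
    {A : ℝ} (hA : A = ∫ x, q x ^ 2 ∂μ) (hApos : 0 < A) :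
    (∫ x, q x * g x ∂μ) ^ 2 * A⁻¹ ≤ ∫ x, g x ^ 2 ∂μ := by
  set B : ℝ := ∫ x, q x * g x ∂μ with hB
  set C : ℝ := ∫ x, g x ^ 2 ∂μ with hC
  set t : ℝ := B / A with ht
  have iq2 : Integrable (fun x => q x ^ 2) μ := by
    simpa [pow_two] using l2_mul_int hq hq
  have ig2 : Integrable (fun x => g x ^ 2) μ := by
    simpa [pow_two] using l2_mul_int hg hg
  have iqg : Integrable (fun x => q x * g x) μ := l2_mul_int hq hg
  have key : 0 ≤ C - 2 * t * B + t ^ 2 * A := by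
    have h0 : 0 ≤ ∫ x, (g x - t * q x) ^ 2 ∂μ :=
      integral_nonneg fun x => sq_nonneg _
    have hexp : ∫ x, (g x - t * q x) ^ 2 ∂μ = C - 2 * t * B + t ^ 2 * A := by
      have heq : (fun x => (g x - t * q x) ^ 2)
          = fun x => g x ^ 2 - 2 * t * (q x * g x) + t ^ 2 * q x ^ 2 :=
        funext fun x => by ring
      have i1 : Integrable (fun x => g x ^ 2 - 2 * t * (q x * g x)) μ :=
        ig2.sub (iqg.const_mul _)
      have i2 : Integrable (fun x => t ^ 2 * q x ^ 2) μ := iq2.const_mul _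
      rw [heq, integral_add i1 i2,
        integral_sub ig2 (iqg.const_mul _), integral_const_mul, integral_const_mul,
        hA, hB, hC]
    linarith [h0, hexp.le, hexp.ge]
  have hAne : A ≠ 0 := ne_of_gt hApos
  rw [ht, div_eq_mul_inv] at key
  have e1 : (B * A⁻¹) ^ 2 * A = B ^ 2 * A⁻¹ := by field_simp
  have e2 : 2 * (B * A⁻¹) * B = 2 * (B ^ 2 * A⁻¹) := by ring
  linarith [key, e1, e2]

/-- Q-projection in the moment-condition model (Example 3): with `Φ ∈ L²(μ; ℝ^k)`,
`∫ Φ dμ = 0`, `∫ΦΦᵗ dμ` invertible, `h ∈ L²(μ)` with `∫ h dμ = θ₀`,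
`h^⊥ = h - (∫ hΦᵗ dμ)[∫ΦΦᵗ dμ]⁻¹ Φ` and `V = Var_μ(h^⊥) > 0`, the minimum of
`∫ (1-f)² dμ` over `f ∈ L²(μ)` with `∫ f dμ = 1`, `∫ Φ f dμ = 0`, `∫ h f dμ = θ`
equals `(θ₀-θ)² V⁻¹`, attained at `f_θ = 1 - (θ₀-θ)V⁻¹(h^⊥ - θ₀)`. -/
theorem qprojection_moment_condition {X : Type*} [MeasurableSpace X]
    (μ : Measure X) [IsProbabilityMeasure μ] (k : ℕ)
    (Φ : X → Fin k → ℝ) (hΦ : ∀ i, MemLp (fun x => Φ x i) 2 μ)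
    (hΦ0 : ∀ i, ∫ x, Φ x i ∂μ = 0)
    (M : Matrix (Fin k) (Fin k) ℝ) (hM : M = Matrix.of fun i j => ∫ x, Φ x i * Φ x j ∂μ)
    (hMinv : IsUnit M.det)
    (h : X → ℝ) (hh : MemLp h 2 μ) (θ₀ : ℝ) (hθ₀ : ∫ x, h x ∂μ = θ₀)
    (hp : X → ℝ)
    (hhp : hp = fun x => h x - ∑ i, ∑ j, (∫ y, h y * Φ y i ∂μ) * M⁻¹ i j * Φ x j)
    (V : ℝ) (hV : V = ∫ x, (hp x - θ₀) ^ 2 ∂μ) (hVpos : 0 < V) (θ : ℝ)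
    (fθ : X → ℝ) (hfθ : fθ = fun x => 1 - (θ₀ - θ) * V⁻¹ * (hp x - θ₀)) :
    (∫ x, fθ x ∂μ = 1) ∧ (∀ i, ∫ x, Φ x i * fθ x ∂μ = 0) ∧
      (∫ x, h x * fθ x ∂μ = θ) ∧
      (∫ x, (1 - fθ x) ^ 2 ∂μ = (θ₀ - θ) ^ 2 * V⁻¹) ∧
      (∀ f : X → ℝ, MemLp f 2 μ → (∫ x, f x ∂μ = 1) → (∀ i, ∫ x, Φ x i * f x ∂μ = 0) →
        (∫ x, h x * f x ∂μ = θ) →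
        (θ₀ - θ) ^ 2 * V⁻¹ ≤ ∫ x, (1 - f x) ^ 2 ∂μ) := by
  have hVne : V ≠ 0 := ne_of_gt hVpos
  -- coefficients
  set a : Fin k → ℝ := fun i => ∫ y, h y * Φ y i ∂μ with ha
  set c : Fin k → ℝ := fun j => ∑ i, a i * M⁻¹ i j with hc
  have hp_eq : hp = fun x => h x - ∑ j, c j * Φ x j := by
    rw [hhp]; funext x
    congr 1
    rw [Finset.sum_comm]
    exact Finset.sum_congr rfl fun j _ => by rw [hc, Finset.sum_mul]
  set q : X → ℝ := fun x => hp x - θ₀ with hqdef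
  have hq_eq : ∀ x, q x = h x - (∑ j, c j * Φ x j) - θ₀ := by
    intro x; rw [hqdef]; simp only [hp_eq]
  -- integrability basics
  have intΦ : ∀ i, Integrable (fun x => Φ x i) μ := fun i => (hΦ i).integrable one_le_two
  have inth : Integrable h μ := hh.integrable one_le_two
  have hpmem : MemLp hp 2 μ := by
    rw [hp_eq]
    exact hh.sub (memLp_finset_sum _ fun j _ => (hΦ j).const_mul (c j))
  have hqmem : MemLp q 2 μ := by
    rw [hqdef]; exact hpmem.sub (memLp_const θ₀)
  have intq : Integrable q μ := hqmem.integrable one_le_two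
  have intq2 : Integrable (fun x => q x ^ 2) μ := by
    simpa [pow_two] using l2_mul_int hqmem hqmem
  have hVq : V = ∫ x, q x ^ 2 ∂μ := by rw [hV, hqdef]
  -- ∫ q f for arbitrary L² f
  have qint : ∀ f : X → ℝ, MemLp f 2 μ →
      ∫ x, q x * f x ∂μ
        = (∫ x, h x * f x ∂μ) - (∑ j, c j * ∫ x, Φ x j * f x ∂μ)
          - θ₀ * ∫ x, f x ∂μ := by
    intro f hf
    have intf : Integrable f μ := hf.integrable one_le_two
    have inthf : Integrable (fun x => h x * f x) μ := l2_mul_int hh hf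
    have intΦf : ∀ j, Integrable (fun x => Φ x j * f x) μ := fun j => l2_mul_int (hΦ j) hf
    have intS : Integrable (fun x => ∑ j, c j * (Φ x j * f x)) μ :=
      integrable_finset_sum _ fun j _ => (intΦf j).const_mul (c j)
    have heq : (fun x => q x * f x)
        = fun x => h x * f x - (∑ j, c j * (Φ x j * f x)) - θ₀ * f x := by
      funext x
      rw [hq_eq x, sub_mul, sub_mul, Finset.sum_mul]
      congr 2
      exact Finset.sum_congr rfl fun j _ => by ring
    have i1 : Integrable (fun x => h x * f x - ∑ j, c j * (Φ x j * f x)) μ :=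
      inthf.sub intS
    rw [heq, integral_sub i1 (intf.const_mul θ₀),
      integral_sub inthf intS, integral_finset_sum _ (fun j _ => (intΦf j).const_mul (c j)),
      integral_const_mul]
    congr 2
    exact Finset.sum_congr rfl fun j _ => (integral_const_mul _ _)
  -- ∫ q = 0
  have int_q : ∫ x, q x ∂μ = 0 := by
    have h1 := qint (fun _ => 1) (memLp_const 1)
    simp only [mul_one] at h1
    rw [h1, hθ₀]
    simp [hΦ0]
  -- ∫ q Φᵢ = 0
  have intΦq : ∀ i, ∫ x, q x * Φ x i ∂μ = 0 := by
    intro i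
    have h1 := qint (fun x => Φ x i) (hΦ i)
    rw [h1, hΦ0 i, mul_zero, sub_zero]
    have hMs : ∀ p r, (∫ x, Φ x p * Φ x r ∂μ) = M p r := fun p r => by rw [hM]; rfl
    have hsum : ∑ j, c j * M j i = a i := by
      have hinv : M⁻¹ * M = 1 := Matrix.nonsing_inv_mul M hMinv
      calc ∑ j, c j * M j i = ∑ j, ∑ l, a l * M⁻¹ l j * M j i := by
            refine Finset.sum_congr rfl fun j _ => ?_
            rw [hc, Finset.sum_mul]
        _ = ∑ l, a l * ∑ j, M⁻¹ l j * M j i := by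
            rw [Finset.sum_comm]
            simp [Finset.mul_sum, mul_assoc]
        _ = ∑ l, a l * (M⁻¹ * M) l i := by
            exact Finset.sum_congr rfl fun l _ => by rw [Matrix.mul_apply]
        _ = a i := by rw [hinv]; simp [Matrix.one_apply]
    have hai : (∫ x, h x * Φ x i ∂μ) = a i := by rw [ha]
    rw [hai]
    rw [show (∑ j, c j * ∫ x, Φ x j * Φ x i ∂μ) = ∑ j, c j * M j i from
      Finset.sum_congr rfl fun j _ => by rw [hMs]]
    rw [hsum, sub_self]
  -- ∫ q h = V
  have inthq : ∫ x, q x * h x ∂μ = V := by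
    have intqΦ : ∀ j, Integrable (fun x => q x * Φ x j) μ := fun j =>
      l2_mul_int hqmem (hΦ j)
    have intS : Integrable (fun x => ∑ j, c j * (q x * Φ x j)) μ :=
      integrable_finset_sum _ fun j _ => (intqΦ j).const_mul (c j)
    have heq : (fun x => q x * h x)
        = fun x => q x ^ 2 + (∑ j, c j * (q x * Φ x j)) + θ₀ * q x := by
      funext x
      have hS : ∑ j, c j * (q x * Φ x j) = q x * ∑ j, c j * Φ x j := by
        rw [Finset.mul_sum]
        exact Finset.sum_congr rfl fun j _ => by ring
      rw [hS]
      linear_combination (-(q x)) * hq_eq x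
    have i1 : Integrable (fun x => q x ^ 2 + ∑ j, c j * (q x * Φ x j)) μ :=
      intq2.add intS
    rw [heq, integral_add i1 (intq.const_mul θ₀),
      integral_add intq2 intS, integral_finset_sum _ (fun j _ => (intqΦ j).const_mul (c j))]
    simp only [integral_const_mul, intΦq, mul_zero, int_q, Finset.sum_const_zero, add_zero]
    exact hVq.symm
  -- the candidate fθ
  set cst : ℝ := (θ₀ - θ) * V⁻¹ with hcst
  have hfθq : fθ = fun x => 1 - cst * q x := by
    rw [hfθ, hcst, hqdef]
  have int1 : ∫ x, fθ x ∂μ = 1 := by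
    rw [hfθq]
    have i1 : Integrable (fun x => cst * q x) μ := intq.const_mul cst
    rw [integral_sub (integrable_const 1) i1, integral_const_mul, int_q, mul_zero,
      integral_const, probReal_univ]
    simp
  have int2 : ∀ i, ∫ x, Φ x i * fθ x ∂μ = 0 := by
    intro i
    have heq : (fun x => Φ x i * fθ x) = fun x => Φ x i - cst * (q x * Φ x i) := by
      funext x; rw [hfθq]; ring
    rw [heq, integral_sub (intΦ i) ((l2_mul_int hqmem (hΦ i)).const_mul cst),
      integral_const_mul, intΦq i, mul_zero, hΦ0 i, sub_zero]
  have int3 : ∫ x, h x * fθ x ∂μ = θ := by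
    have heq : (fun x => h x * fθ x) = fun x => h x - cst * (q x * h x) := by
      funext x; rw [hfθq]; ring
    rw [heq, integral_sub inth ((l2_mul_int hqmem hh).const_mul cst),
      integral_const_mul, inthq, hθ₀, hcst]
    field_simp
    ring
  have int4 : ∫ x, (1 - fθ x) ^ 2 ∂μ = (θ₀ - θ) ^ 2 * V⁻¹ := by
    have heq : (fun x => (1 - fθ x) ^ 2) = fun x => cst ^ 2 * q x ^ 2 := by
      funext x; rw [hfθq]; ring
    rw [heq, integral_const_mul, ← hVq, hcst]
    field_simp
  refine ⟨int1, int2, int3, int4, ?_⟩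
  intro f hf hf1 hfΦ hfh
  have intf : Integrable f μ := hf.integrable one_le_two
  have hqf : ∫ x, q x * f x ∂μ = θ - θ₀ := by
    rw [qint f hf, hfh, hf1]
    simp [hfΦ]
  set g : X → ℝ := fun x => 1 - f x with hg
  have hgmem : MemLp g 2 μ := (memLp_const 1).sub hf
  have intqf : Integrable (fun x => q x * f x) μ := l2_mul_int hqmem hf
  have hqg : ∫ x, q x * g x ∂μ = θ₀ - θ := by
    have heq : (fun x => q x * g x) = fun x => q x - q x * f x := by
      funext x; rw [hg]; ring
    rw [heq, integral_sub intq intqf, int_q, hqf]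
    ring
  have := cs_aux hqmem hgmem hVq hVpos
  rw [hqg] at this
  have hsq : (θ₀ - θ) ^ 2 * V⁻¹ ≤ ∫ x, g x ^ 2 ∂μ := this
  simpa [hg] using hsq
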